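/- Let d : ℕ, let μ be a probability measure on Fin d → ℝ, let h : (Fin d → ℝ) → ℝ be a function and x : Fin d → ℝ a point, and set δ(ε) = h(x) − h(x − ε). Assume δ is measurable, ε ↦ (δ ε)² is μ-integrable, and ε ↦ ‖ε‖² is μ-integrable. Define M : Matrix (Fin d) (Fin d) ℝ by M i j = ∫ (ε i) * (ε j) dμ(ε) and b : Fin d → ℝ by b i = ∫ (δ ε) * (ε i) dμ(ε). If M is invertible, then Φ* := M⁻¹.mulVec b minimizes the unfaithfulness Δ(Φ) = ∫ (Φ ⬝ᵥ ε − δ ε)² dμ(ε), i.e. Δ(Φ*) ≤ Δ(Φ) for every Φ : Fin d → ℝ. -/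

import Mathlib

open MeasureTheory Matrix

private lemma memL2_mul_integrable {α : Type*} [MeasurableSpace α] {μ : Measure α}
    {f g : α → ℝ} (hf : MemLp f 2 μ) (hg : MemLp g 2 μ) :
    Integrable (fun x => f x * g x) μ := by
  refine Integrable.mono' (g := fun x => 1/2 * (f x ^ 2 + g x ^ 2))
    (by simpa using (hf.integrable_sq.add hg.integrable_sq).const_mul (1/2))
    (hf.1.mul hg.1) (ae_of_all _ fun x => ?_)
  have h1 := sq_nonneg (|f x| - |g x|)
  have h2 : ‖f x * g x‖ = |f x| * |g x| := by rw [Real.norm_eq_abs, abs_mul]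
  nlinarith [sq_abs (f x), sq_abs (g x), abs_nonneg (f x), abs_nonneg (g x)]

/-- The optimal linear feature attribution `Φ* = M⁻¹ b` minimizes the unfaithfulness
`Δ(Φ) = ∫ (Φ ⬝ᵥ ε − (h x − h (x − ε)))² dμ`. -/
theorem optimal_linear_attribution
    (d : ℕ) (μ : Measure (Fin d → ℝ)) [IsProbabilityMeasure μ]
    (h : (Fin d → ℝ) → ℝ) (x : Fin d → ℝ)
    (δ : (Fin d → ℝ) → ℝ) (hδ : δ = fun ε => h x - h (x - ε))
    (hδmeas : Measurable δ)
    (hδ2 : Integrable (fun ε => (δ ε) ^ 2) μ)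
    (hnorm : Integrable (fun ε => ‖ε‖ ^ 2) μ)
    (M : Matrix (Fin d) (Fin d) ℝ)
    (hM : ∀ i j, M i j = ∫ ε, ε i * ε j ∂μ)
    (b : Fin d → ℝ) (hb : ∀ i, b i = ∫ ε, δ ε * ε i ∂μ)
    (hMinv : IsUnit M) :
    ∀ Φ : Fin d → ℝ,
      (∫ ε, ((M⁻¹.mulVec b) ⬝ᵥ ε - δ ε) ^ 2 ∂μ) ≤ ∫ ε, (Φ ⬝ᵥ ε - δ ε) ^ 2 ∂μ := by
  intro Φ
  classical
  set Φs : Fin d → ℝ := M⁻¹.mulVec b with hΦs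
  -- L² facts
  have hnormL2 : MemLp (fun ε : Fin d → ℝ => ‖ε‖) 2 μ := by
    rw [memLp_two_iff_integrable_sq (by fun_prop)]
    exact hnorm
  have hcoord : ∀ i, MemLp (fun ε : Fin d → ℝ => ε i) 2 μ := by
    intro i
    refine hnormL2.of_le (measurable_pi_apply i).aestronglyMeasurable
      (ae_of_all _ fun ε => ?_)
    simpa using norm_le_pi_norm ε i
  have hδL2 : MemLp δ 2 μ :=
    (memLp_two_iff_integrable_sq hδmeas.aestronglyMeasurable).mpr hδ2
  have hdot : ∀ w : Fin d → ℝ, MemLp (fun ε => w ⬝ᵥ ε) 2 μ := by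
    intro w
    have := memLp_finset_sum (f := fun i (ε : Fin d → ℝ) => w i * ε i)
      Finset.univ (fun i _ => (hcoord i).const_mul (w i))
    simpa [dotProduct] using this
  have hres : ∀ w : Fin d → ℝ, MemLp (fun ε => w ⬝ᵥ ε - δ ε) 2 μ :=
    fun w => (hdot w).sub hδL2
  -- `M.mulVec Φs = b`
  have hMb : M.mulVec Φs = b := by
    rw [hΦs, Matrix.mulVec_mulVec, Matrix.mul_nonsing_inv M
      ((Matrix.isUnit_iff_isUnit_det M).mp hMinv), Matrix.one_mulVec]
  -- cross terms vanish
  have key : ∀ i, ∫ ε, (Φs ⬝ᵥ ε - δ ε) * ε i ∂μ = 0 := by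
    intro i
    have h1 : ∫ ε, (Φs ⬝ᵥ ε) * ε i ∂μ = b i := by
      have e1 : ∀ ε : Fin d → ℝ, (Φs ⬝ᵥ ε) * ε i = ∑ j, Φs j * (ε j * ε i) := by
        intro ε
        simp [dotProduct, Finset.sum_mul, mul_assoc]
      calc ∫ ε, (Φs ⬝ᵥ ε) * ε i ∂μ
          = ∫ ε, ∑ j, Φs j * (ε j * ε i) ∂μ := by simp_rw [e1]
        _ = ∑ j, ∫ ε, Φs j * (ε j * ε i) ∂μ := by
            refine integral_finset_sum _ fun j _ => ?_
            exact (memL2_mul_integrable (hcoord j) (hcoord i)).const_mul _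
        _ = ∑ j, Φs j * ∫ ε, ε j * ε i ∂μ := by simp_rw [integral_const_mul]
        _ = ∑ j, M i j * Φs j := by
            refine Finset.sum_congr rfl fun j _ => ?_
            rw [hM i j, mul_comm (Φs j)]
            congr 1
            exact integral_congr_ae (ae_of_all _ fun ε => mul_comm _ _)
        _ = (M.mulVec Φs) i := by simp [Matrix.mulVec, dotProduct]
        _ = b i := by rw [hMb]
    have h2 : Integrable (fun ε => (Φs ⬝ᵥ ε) * ε i) μ :=
      memL2_mul_integrable (hdot Φs) (hcoord i)
    have h3 : Integrable (fun ε => δ ε * ε i) μ :=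
      memL2_mul_integrable hδL2 (hcoord i)
    have : ∫ ε, (Φs ⬝ᵥ ε - δ ε) * ε i ∂μ
        = (∫ ε, (Φs ⬝ᵥ ε) * ε i ∂μ) - ∫ ε, δ ε * ε i ∂μ := by
      rw [← integral_sub h2 h3]
      congr 1
      funext ε
      ring
    rw [this, h1, hb i, sub_self]
  set v : Fin d → ℝ := Φ - Φs with hv
  have cross : ∫ ε, (Φs ⬝ᵥ ε - δ ε) * (v ⬝ᵥ ε) ∂μ = 0 := by
    have e1 : ∀ ε : Fin d → ℝ, (Φs ⬝ᵥ ε - δ ε) * (v ⬝ᵥ ε)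
        = ∑ i, v i * ((Φs ⬝ᵥ ε - δ ε) * ε i) := by
      intro ε
      simp [dotProduct, Finset.mul_sum]
      ring_nf
    calc ∫ ε, (Φs ⬝ᵥ ε - δ ε) * (v ⬝ᵥ ε) ∂μ
        = ∫ ε, ∑ i, v i * ((Φs ⬝ᵥ ε - δ ε) * ε i) ∂μ := by simp_rw [e1]
      _ = ∑ i, ∫ ε, v i * ((Φs ⬝ᵥ ε - δ ε) * ε i) ∂μ := by
          refine integral_finset_sum _ fun i _ => ?_
          exact (memL2_mul_integrable (hres Φs) (hcoord i)).const_mul _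
      _ = ∑ i, v i * ∫ ε, (Φs ⬝ᵥ ε - δ ε) * ε i ∂μ := by simp_rw [integral_const_mul]
      _ = 0 := by simp [key]
  -- decomposition
  have hsplit : ∀ ε : Fin d → ℝ, (Φ ⬝ᵥ ε - δ ε) ^ 2
      = (Φs ⬝ᵥ ε - δ ε) ^ 2 + 2 * ((Φs ⬝ᵥ ε - δ ε) * (v ⬝ᵥ ε)) + (v ⬝ᵥ ε) ^ 2 := by
    intro ε
    have : v ⬝ᵥ ε = Φ ⬝ᵥ ε - Φs ⬝ᵥ ε := by rw [hv, sub_dotProduct]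
    rw [this]
    ring
  have int1 : Integrable (fun ε => (Φs ⬝ᵥ ε - δ ε) ^ 2) μ := (hres Φs).integrable_sq
  have int2 : Integrable (fun ε => (Φs ⬝ᵥ ε - δ ε) * (v ⬝ᵥ ε)) μ :=
    memL2_mul_integrable (hres Φs) (hdot v)
  have int3 : Integrable (fun ε => (v ⬝ᵥ ε) ^ 2) μ := (hdot v).integrable_sq
  calc ∫ ε, (Φs ⬝ᵥ ε - δ ε) ^ 2 ∂μ
      ≤ (∫ ε, (Φs ⬝ᵥ ε - δ ε) ^ 2 ∂μ) + ∫ ε, (v ⬝ᵥ ε) ^ 2 ∂μ := by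
        have : 0 ≤ ∫ ε, (v ⬝ᵥ ε) ^ 2 ∂μ := integral_nonneg fun ε => sq_nonneg _
        linarith
    _ = ∫ ε, (Φ ⬝ᵥ ε - δ ε) ^ 2 ∂μ := by
        have e2 : ∫ ε, (Φ ⬝ᵥ ε - δ ε) ^ 2 ∂μ
            = ∫ ε, (((Φs ⬝ᵥ ε - δ ε) ^ 2 + (v ⬝ᵥ ε) ^ 2) + 2 * ((Φs ⬝ᵥ ε - δ ε) * (v ⬝ᵥ ε))) ∂μ := by
          refine integral_congr_ae (ae_of_all _ fun ε => ?_)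
          simp only [hsplit]; ring
        have int13 : Integrable (fun ε => (Φs ⬝ᵥ ε - δ ε) ^ 2 + (v ⬝ᵥ ε) ^ 2) μ := int1.add int3
        have int2' : Integrable (fun ε => 2 * ((Φs ⬝ᵥ ε - δ ε) * (v ⬝ᵥ ε))) μ := int2.const_mul 2
        rw [e2, integral_add int13 int2', integral_add int1 int3,
          integral_const_mul, cross]
        ring
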